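/- The matrix G(D) = Σ_{i=0}^m H̃_i D^i ∈ F[D]^{κ×n} is a basic generator matrix; in particular, it admits a polynomial right inverse: there exists a matrix K(D) ∈ F[D]^{n×κ} with G(D)·K(D) equal to the κ×κ identity matrix over F[D]. -/

import Mathlib

/-- **`G(D) = ∑ H̃ᵢ Dⁱ` is a basic generator matrix:** it has a polynomial
right inverse `K(D)` with `G(D)·K(D) = 1`. -/
theorem convolutional_generator_basic
    {F : Type*} [Field F] [Fintype F] {n κ m : ℕ} (hn : 0 < n) (hκ : 0 < κ)
    (H : Fin (m + 1) → Matrix (Fin κ) (Fin n) F)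
    (hind : LinearIndependent F
      (fun p : {p : Fin (m + 1) × Fin κ // H p.1 p.2 ≠ 0} => H p.1.1 p.1.2))
    (h0 : ∀ j : Fin κ, H 0 j ≠ 0)
    (G : Matrix (Fin κ) (Fin n) (Polynomial F))
    (hG : G = ∑ i : Fin (m + 1), (H i).map (fun a => Polynomial.C a * Polynomial.X ^ (i : ℕ))) :
    ∃ K : Matrix (Fin n) (Fin κ) (Polynomial F), G * K = 1 := by
  classical
  obtain ⟨g, hg⟩ := LinearMap.exists_leftInverse_of_injective
    (Finsupp.linearCombination F
      (fun p : {p : Fin (m + 1) × Fin κ // H p.1 p.2 ≠ 0} => H p.1.1 p.1.2))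
    (LinearMap.ker_eq_bot.mpr hind)
  refine ⟨fun k j' => Polynomial.C (g (Pi.single k 1) ⟨(0, j'), h0 j'⟩), ?_⟩
  refine Matrix.ext fun j j' => ?_
  set q : {p : Fin (m + 1) × Fin κ // H p.1 p.2 ≠ 0} := ⟨(0, j'), h0 j'⟩ with hq
  have hgv : ∀ p : {p : Fin (m + 1) × Fin κ // H p.1 p.2 ≠ 0},
      g (H p.1.1 p.1.2) = Finsupp.single p 1 := by
    intro p
    have := LinearMap.congr_fun hg (Finsupp.single p 1)
    simpa [Finsupp.linearCombination_single] using this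
  set ℓ : (Fin n → F) →ₗ[F] F := (Finsupp.lapply q).comp g with hℓ
  have key : ∀ i : Fin (m + 1), (∑ k, H i j k * g (Pi.single k 1) q) =
      if i = 0 ∧ j = j' then 1 else 0 := by
    intro i
    have h1 : (∑ k, H i j k * g (Pi.single k 1) q) = ℓ (H i j) := by
      rw [LinearMap.pi_apply_eq_sum_univ ℓ (H i j)]
      simp only [hℓ, LinearMap.comp_apply, Finsupp.lapply_apply, smul_eq_mul]
      have hps : ∀ k : Fin n, (fun r => if k = r then (1 : F) else 0) = Pi.single k 1 := by
        intro k; funext r; simp [Pi.single_apply, eq_comm]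
      simp only [hps]
    rw [h1]
    by_cases hz : H i j = 0
    · have hfalse : ¬(i = 0 ∧ j = j') := by
        rintro ⟨rfl, rfl⟩; exact h0 j hz
      simp [hz, hfalse]
    · have : ℓ (H i j) = (Finsupp.single (⟨(i, j), hz⟩ :
          {p : Fin (m + 1) × Fin κ // H p.1 p.2 ≠ 0}) 1) q := by
        simp [hℓ, hgv ⟨(i, j), hz⟩]
      rw [this, Finsupp.single_apply]
      congr 1
      simp only [hq, Subtype.mk.injEq, Prod.mk.injEq, eq_iff_iff]
  erw [Matrix.mul_apply]
  subst hG
  simp only [Matrix.sum_apply, Matrix.map_apply]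
  rw [Finset.sum_congr rfl fun k _ => Finset.sum_mul ..]
  rw [Finset.sum_comm]
  have : ∀ i : Fin (m + 1),
      (∑ k, Polynomial.C (H i j k) * Polynomial.X ^ (i : ℕ) *
        Polynomial.C (g (Pi.single k 1) q)) =
      Polynomial.C (if i = 0 ∧ j = j' then (1 : F) else 0) * Polynomial.X ^ (i : ℕ) := by
    intro i
    rw [← key i]
    rw [map_sum, Finset.sum_mul]
    refine Finset.sum_congr rfl fun k _ => ?_
    rw [map_mul]; ring
  rw [Finset.sum_congr rfl fun i _ => this i]
  by_cases hjj : j = j'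
  · subst hjj
    simp only [and_true]
    rw [Finset.sum_eq_single 0]
    · simp [Matrix.one_apply]
    · intro b _ hb; simp [hb]
    · simp
  · simp [hjj, Matrix.one_apply, hjj]
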